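/- (Discrete entropy conservation condition for the explicit entropy-conservative GLM-MHD flux.) Fix γ > 1 and c_h ∈ ℝ. Let two GLM-MHD states (ρ_X, v_X, p_X, B_X, ψ_X), X ∈ {L, R}, be given with ρ_X > 0, p_X > 0, ρ_L ≠ ρ_R and β_L ≠ β_R. Define f^ec ∈ ℝ⁹ componentwise by: f₁ = ρ^ln·{v₁}; f₂ = ρ^ln·{v₁}² − {B₁}² + p̄ + ½({B₁B₁} + {B₂B₂} + {B₃B₃}); f₃ = ρ^ln·{v₁}{v₂} − {B₁}{B₂}; f₄ = ρ^ln·{v₁}{v₃} − {B₁}{B₃}; f₆ = c_h{ψ}; f₇ = {v₁}{B₂} − {v₂}{B₁}; f₈ = {v₁}{B₃} − {v₃}{B₁}; f₉ = c_h{B₁}; and f₅ = f₁·[1/(2(γ−1)β^ln) − ½({v₁²} + {v₂²} + {v₃²})] + f₂{v₁} + f₃{v₂} + f₄{v₃} + f₆{B₁} + f₇{B₂} + f₈{B₃} + f₉{ψ} − ½({v₁B₁²} + {v₁B₂²} + {v₁B₃²}) + {v₁B₁}{B₁} + {v₂B₂}{B₁} + {v₃B₃}{B₁} − c_h{B₁ψ},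 where p̄ := {ρ}/(2{β}) and all jumps, means and logarithmic means are taken between the L and R states. Then ⟦w⟧ᵀ f^ec = ⟦Ψ₁⟧ − {B₁}·⟦Φ⟧, where Ψ₁ := wᵀ f₁^a − v₁S + Φ·B₁ is the x-direction entropy flux potential and Φ := 2β(v·B). -/

import Mathlib

open Matrix

/-- The logarithmic mean `a^ln = (b − a)/(log b − log a)`. -/
noncomputable def lnMean (a b : ℝ) : ℝ := (b - a) / (Real.log b - Real.log a)

/-- The arithmetic mean `{a} = (a_L + a_R)/2`. -/
noncomputable def avg (a b : ℝ) : ℝ := (a + b) / 2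

/-- The entropy variables `w` of a GLM-MHD state. -/
noncomputable def entW9 (γ ρ p ψ : ℝ) (v B : Fin 3 → ℝ) : Fin 9 → ℝ :=
  let β : ℝ := ρ / (2 * p)
  let s : ℝ := Real.log (p * ρ ^ (-γ))
  ![(γ - s) / (γ - 1) - β * ∑ k, (v k) ^ 2,
    2 * β * v 0, 2 * β * v 1, 2 * β * v 2,
    -(2 * β),
    2 * β * B 0, 2 * β * B 1, 2 * β * B 2,
    2 * β * ψ]

/-- The `x`-direction advective GLM-MHD flux `f₁^a`. -/
noncomputable def fadv1 (γ c_h ρ p ψ : ℝ) (v B : Fin 3 → ℝ) : Fin 9 → ℝ :=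
  ![ρ * v 0,
    ρ * (v 0) ^ 2 + p + (1/2) * (∑ k, (B k) ^ 2) - (B 0) ^ 2,
    ρ * v 0 * v 1 - B 0 * B 1,
    ρ * v 0 * v 2 - B 0 * B 2,
    v 0 * ((1/2) * ρ * (∑ k, (v k) ^ 2) + γ * p / (γ - 1) + ∑ k, (B k) ^ 2)
      - B 0 * (∑ k, v k * B k) + c_h * ψ * B 0,
    c_h * ψ,
    v 0 * B 1 - v 1 * B 0,
    v 0 * B 2 - v 2 * B 0,
    c_h * B 0]

/-- The contracted Janhunen nonconservative term `Φ = 2β(v·B)`. -/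
noncomputable def PhiJ (ρ p : ℝ) (v B : Fin 3 → ℝ) : ℝ :=
  2 * (ρ / (2 * p)) * ∑ k, v k * B k

/-- The entropy function `S = −ρs/(γ−1)` with `s = log (p ρ^(−γ))`. -/
noncomputable def entS9 (γ ρ p : ℝ) : ℝ :=
  -(ρ * Real.log (p * ρ ^ (-γ))) / (γ - 1)

/-- The `x`-direction entropy flux potential `Ψ₁ = wᵀ f₁^a − v₁ S + Φ B₁`. -/
noncomputable def Psi1 (γ c_h ρ p ψ : ℝ) (v B : Fin 3 → ℝ) : ℝ :=
  (∑ a, entW9 γ ρ p ψ v B a * fadv1 γ c_h ρ p ψ v B a)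
    - v 0 * entS9 γ ρ p + PhiJ ρ p v B * B 0

/-- The explicit entropy-conservative GLM-MHD numerical flux `f^ec` in the
`x`-direction between a left and a right state. -/
noncomputable def fluxEC (γ c_h : ℝ)
    (ρL pL ψL : ℝ) (vL BL : Fin 3 → ℝ)
    (ρR pR ψR : ℝ) (vR BR : Fin 3 → ℝ) : Fin 9 → ℝ :=
  let βL : ℝ := ρL / (2 * pL)
  let βR : ℝ := ρR / (2 * pR)
  let ρln : ℝ := lnMean ρL ρR
  let βln : ℝ := lnMean βL βR
  let pbar : ℝ := avg ρL ρR / (2 * avg βL βR)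
  let f1 : ℝ := ρln * avg (vL 0) (vR 0)
  let f2 : ℝ := ρln * (avg (vL 0) (vR 0)) ^ 2 - (avg (BL 0) (BR 0)) ^ 2 + pbar
    + (1/2) * (avg (BL 0 * BL 0) (BR 0 * BR 0) + avg (BL 1 * BL 1) (BR 1 * BR 1)
        + avg (BL 2 * BL 2) (BR 2 * BR 2))
  let f3 : ℝ := ρln * avg (vL 0) (vR 0) * avg (vL 1) (vR 1)
    - avg (BL 0) (BR 0) * avg (BL 1) (BR 1)
  let f4 : ℝ := ρln * avg (vL 0) (vR 0) * avg (vL 2) (vR 2)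
    - avg (BL 0) (BR 0) * avg (BL 2) (BR 2)
  let f6 : ℝ := c_h * avg ψL ψR
  let f7 : ℝ := avg (vL 0) (vR 0) * avg (BL 1) (BR 1)
    - avg (vL 1) (vR 1) * avg (BL 0) (BR 0)
  let f8 : ℝ := avg (vL 0) (vR 0) * avg (BL 2) (BR 2)
    - avg (vL 2) (vR 2) * avg (BL 0) (BR 0)
  let f9 : ℝ := c_h * avg (BL 0) (BR 0)
  let f5 : ℝ :=
    f1 * (1 / (2 * (γ - 1) * βln)
        - (1/2) * (avg ((vL 0) ^ 2) ((vR 0) ^ 2) + avg ((vL 1) ^ 2) ((vR 1) ^ 2)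
            + avg ((vL 2) ^ 2) ((vR 2) ^ 2)))
    + f2 * avg (vL 0) (vR 0) + f3 * avg (vL 1) (vR 1) + f4 * avg (vL 2) (vR 2)
    + f6 * avg (BL 0) (BR 0) + f7 * avg (BL 1) (BR 1) + f8 * avg (BL 2) (BR 2)
    + f9 * avg ψL ψR
    - (1/2) * (avg (vL 0 * (BL 0) ^ 2) (vR 0 * (BR 0) ^ 2)
        + avg (vL 0 * (BL 1) ^ 2) (vR 0 * (BR 1) ^ 2)
        + avg (vL 0 * (BL 2) ^ 2) (vR 0 * (BR 2) ^ 2))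
    + avg (vL 0 * BL 0) (vR 0 * BR 0) * avg (BL 0) (BR 0)
    + avg (vL 1 * BL 1) (vR 1 * BR 1) * avg (BL 0) (BR 0)
    + avg (vL 2 * BL 2) (vR 2 * BR 2) * avg (BL 0) (BR 0)
    - c_h * avg (BL 0 * ψL) (BR 0 * ψR)
  ![f1, f2, f3, f4, f5, f6, f7, f8, f9]

lemma psi1_closed (γ c_h ρ p ψ : ℝ) (hγ : 1 < γ) (hρ : 0 < ρ) (hp : 0 < p)
    (v B : Fin 3 → ℝ) :
    Psi1 γ c_h ρ p ψ v B
      = ρ * v 0 + (ρ / (2 * p)) * v 0 * ((B 0) ^ 2 + (B 1) ^ 2 + (B 2) ^ 2)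
        + 2 * (ρ / (2 * p)) * c_h * ψ * B 0 := by
  have hγ' : γ - 1 ≠ 0 := by linarith
  have hs : Real.log (p * ρ ^ (-γ)) = Real.log p - γ * Real.log ρ := by
    rw [Real.log_mul (ne_of_gt hp) (by positivity), Real.log_rpow hρ]; ring
  have hpne : p ≠ 0 := ne_of_gt hp
  simp only [Psi1, entW9, fadv1, entS9, PhiJ, Fin.sum_univ_succ, Fin.sum_univ_zero,
    Matrix.cons_val_zero, Matrix.cons_val_one, Matrix.head_cons, Matrix.cons_val_succ,
    hs, add_zero, Fin.succ_zero_eq_one, Fin.succ_one_eq_two]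
  field_simp
  ring

lemma aux5 (c K a b D : ℝ) (hc : c ≠ 0) (hab : b - a ≠ 0) (hD : D ≠ 0) :
    (-(2 * b) - -(2 * a)) * (K * (1 / (2 * c * ((b - a) / D)))) = -(K * (D / c)) := by
  have h1 : (b - a) / D ≠ 0 := div_ne_zero hab hD
  field_simp
  ring

set_option maxHeartbeats 1000000 in
/-- **Discrete entropy conservation condition** for the explicit
entropy-conservative GLM-MHD flux:
`⟦w⟧ᵀ f^ec = ⟦Ψ₁⟧ − {B₁}·⟦Φ⟧`. -/
theorem fluxEC_entropy_conservation
    (γ c_h : ℝ) (hγ : 1 < γ)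
    (ρL pL ψL : ℝ) (vL BL : Fin 3 → ℝ)
    (ρR pR ψR : ℝ) (vR BR : Fin 3 → ℝ)
    (hρL : 0 < ρL) (hρR : 0 < ρR) (hpL : 0 < pL) (hpR : 0 < pR)
    (hρne : ρL ≠ ρR) (hβne : ρL / (2 * pL) ≠ ρR / (2 * pR)) :
    (∑ a, (entW9 γ ρR pR ψR vR BR a - entW9 γ ρL pL ψL vL BL a)
        * fluxEC γ c_h ρL pL ψL vL BL ρR pR ψR vR BR a)
      = (Psi1 γ c_h ρR pR ψR vR BR - Psi1 γ c_h ρL pL ψL vL BL)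
        - avg (BL 0) (BR 0) * (PhiJ ρR pR vR BR - PhiJ ρL pL vL BL) := by
  have hγ' : γ - 1 ≠ 0 := by linarith
  have hpLne : pL ≠ 0 := ne_of_gt hpL
  have hpRne : pR ≠ 0 := ne_of_gt hpR
  have hlogρ : Real.log ρR - Real.log ρL ≠ 0 := by
    intro h
    exact hρne (by
      have h2 := congrArg Real.exp (sub_eq_zero.mp h)
      rwa [Real.exp_log hρR, Real.exp_log hρL, eq_comm] at h2)
  have hβL : (0:ℝ) < ρL / (2 * pL) := by positivity
  have hβR : (0:ℝ) < ρR / (2 * pR) := by positivity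
  have hlogβ : Real.log (ρR / (2 * pR)) - Real.log (ρL / (2 * pL)) ≠ 0 := by
    intro h
    exact hβne (by
      have h2 := congrArg Real.exp (sub_eq_zero.mp h)
      rwa [Real.exp_log hβR, Real.exp_log hβL, eq_comm] at h2)
  have hbL : Real.log (ρL / (2 * pL)) = Real.log ρL - (Real.log 2 + Real.log pL) := by
    rw [Real.log_div (ne_of_gt hρL) (by positivity),
      Real.log_mul two_ne_zero (ne_of_gt hpL)]
  have hbR : Real.log (ρR / (2 * pR)) = Real.log ρR - (Real.log 2 + Real.log pR) := by
    rw [Real.log_div (ne_of_gt hρR) (by positivity),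
      Real.log_mul two_ne_zero (ne_of_gt hpR)]
  have hD : (Real.log ρR - Real.log pR) - (Real.log ρL - Real.log pL) ≠ 0 := by
    intro h; apply hlogβ; rw [hbL, hbR]; linarith [sub_eq_zero.mp h]
  have hβdiff : ρR / (2 * pR) - ρL / (2 * pL) ≠ 0 := sub_ne_zero.2 (Ne.symm hβne)
  have hβsum : ρL / (2 * pL) + ρR / (2 * pR) ≠ 0 := by positivity
  have hsL : Real.log (pL * ρL ^ (-γ)) = Real.log pL - γ * Real.log ρL := by
    rw [Real.log_mul (ne_of_gt hpL) (by positivity), Real.log_rpow hρL]; ring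
  have hsR : Real.log (pR * ρR ^ (-γ)) = Real.log pR - γ * Real.log ρR := by
    rw [Real.log_mul (ne_of_gt hpR) (by positivity), Real.log_rpow hρR]; ring
  have hA : lnMean ρL ρR * (Real.log ρR - Real.log ρL) = ρR - ρL := by
    rw [lnMean]; exact div_mul_cancel₀ _ hlogρ
  have hBnval : lnMean (ρL / (2 * pL)) (ρR / (2 * pR))
      = (ρR / (2 * pR) - ρL / (2 * pL))
        / ((Real.log ρR - Real.log pR) - (Real.log ρL - Real.log pL)) := by
    rw [lnMean, hbL, hbR]; ring_nf
  have h5 : (-(2 * (ρR / (2 * pR))) - -(2 * (ρL / (2 * pL))))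
      * (lnMean ρL ρR * ((vL 0 + vR 0) / 2)
        * (1 / (2 * (γ - 1) * lnMean (ρL / (2 * pL)) (ρR / (2 * pR)))))
      = -(lnMean ρL ρR * ((vL 0 + vR 0) / 2)
        * (((Real.log ρR - Real.log pR) - (Real.log ρL - Real.log pL)) / (γ - 1))) := by
    rw [hBnval]
    exact aux5 (γ - 1) _ _ _ _ hγ' hβdiff hD
  have h2 : (ρL / (2 * pL) + ρR / (2 * pR)) * (vR 0 - vL 0)
        * ((ρL + ρR) / 2 / (2 * ((ρL / (2 * pL) + ρR / (2 * pR)) / 2)))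
      = (vR 0 - vL 0) * ((ρL + ρR) / 2) := by
    field_simp
  have hw1L : (γ - Real.log (pL * ρL ^ (-γ))) / (γ - 1)
      = Real.log ρL + (Real.log ρL - Real.log pL + γ) / (γ - 1) := by
    rw [hsL]; field_simp; ring
  have hw1R : (γ - Real.log (pR * ρR ^ (-γ))) / (γ - 1)
      = Real.log ρR + (Real.log ρR - Real.log pR + γ) / (γ - 1) := by
    rw [hsR]; field_simp; ring
  rw [psi1_closed γ c_h ρR pR ψR hγ hρR hpR vR BR,
    psi1_closed γ c_h ρL pL ψL hγ hρL hpL vL BL]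
  simp only [fluxEC, entW9, PhiJ, avg, Fin.sum_univ_succ, Fin.sum_univ_zero,
    Matrix.cons_val_zero, Matrix.cons_val_one, Matrix.head_cons, Matrix.cons_val_succ,
    hw1L, hw1R, Fin.succ_zero_eq_one, Fin.succ_one_eq_two, add_zero]
  linear_combination ((vL 0 + vR 0) / 2) * hA + h5 + h2
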